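/- arXiv:1510.08139 — 2 statements merged into one kernel-verified Lean document; each statement's English description precedes it below -/
import Mathlib

section
/- Let m ≥ 3 and let g be the Minkowski bilinear form on ℝ^m. Let v ∈ ℝ^m be a nonzero null vector and P = v^⊥. Define the alternating bilinear form ω₀ on the space P × P of pairs by ω₀((a₁, b₁), (a₂, b₂)) = g(a₁, b₂) − g(a₂, b₁). Then the radical of ω₀ (the set of pairs (a, b) ∈ P × P with ω₀((a, b), (a', b')) = 0 for all (a', b') ∈ P × P) is exactly the two-dimensional subspace spanned by (v, 0) and (0, v). -/
open Module Matrix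

/-- The Minkowski bilinear form on `ℝ^m = (Fin m → ℝ)`:
`g(x, y) = −x₀·y₀ + Σ_{i=1}^{m−1} xᵢ·yᵢ`. -/
noncomputable def mink {m : ℕ} (x y : Fin m → ℝ) : ℝ :=
  ∑ i : Fin m, (if (i : ℕ) = 0 then -(x i * y i) else x i * y i)

/-- The `g`-orthogonal subspace `v^⊥ = {u ∈ ℝ^m : g(v, u) = 0}` of a vector `v`. -/
def minkOrtho {m : ℕ} (v : Fin m → ℝ) : Submodule ℝ (Fin m → ℝ) where
  carrier := {u | mink v u = 0}
  zero_mem' := by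
    simp [mink]
  add_mem' := by
    intro a b ha hb
    have h : mink v (a + b) = mink v a + mink v b := by
      simp only [mink, Pi.add_apply, mul_add, neg_add, ← Finset.sum_add_distrib]
      apply Finset.sum_congr rfl
      intro i _
      by_cases h : (i : ℕ) = 0 <;> simp [h]
    simp only [Set.mem_setOf_eq] at *
    rw [h, ha, hb, add_zero]
  smul_mem' := by
    intro c a ha
    have h : mink v (c • a) = c * mink v a := by
      simp only [mink, Pi.smul_apply, smul_eq_mul, Finset.mul_sum]
      apply Finset.sum_congr rfl
      intro i _
      by_cases h : (i : ℕ) = 0 <;> simp [h] <;> ring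
    simp only [Set.mem_setOf_eq] at *
    rw [h, ha, mul_zero]

lemma mink_comm {m : ℕ} (x y : Fin m → ℝ) : mink x y = mink y x := by
  unfold mink
  apply Finset.sum_congr rfl
  intro i _
  by_cases h : (i : ℕ) = 0 <;> simp [h, mul_comm]

lemma mink_eq {m : ℕ} (x y : Fin m → ℝ) :
    mink x y = (fun i : Fin m => if (i : ℕ) = 0 then -x i else x i) ⬝ᵥ y := by
  unfold mink dotProduct
  apply Finset.sum_congr rfl
  intro i _
  by_cases h : (i : ℕ) = 0 <;> simp [h]

lemma mink_smul_right {m : ℕ} (c : ℝ) (x y : Fin m → ℝ) :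
    mink x (c • y) = c * mink x y := by
  simp [mink_eq, dotProduct_smul]

lemma mink_smul_left {m : ℕ} (c : ℝ) (x y : Fin m → ℝ) :
    mink (c • x) y = c * mink x y := by
  rw [mink_comm, mink_smul_right, mink_comm]

lemma mink_sub_right {m : ℕ} (x y z : Fin m → ℝ) :
    mink x (y - z) = mink x y - mink x z := by
  simp [mink_eq, dotProduct_sub]

lemma mink_sub_left {m : ℕ} (x y z : Fin m → ℝ) :
    mink (x - y) z = mink x z - mink y z := by
  rw [mink_comm, mink_sub_right, mink_comm x z, mink_comm y z]

lemma mink_zero_right {m : ℕ} (x : Fin m → ℝ) : mink x 0 = 0 := by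
  simp [mink]

lemma mink_zero_left {m : ℕ} (x : Fin m → ℝ) : mink 0 x = 0 := by
  simp [mink]

lemma mink_eta_self {m : ℕ} (x : Fin m → ℝ) :
    mink x (fun i => if (i : ℕ) = 0 then -x i else x i) = ∑ i, x i ^ 2 := by
  unfold mink
  apply Finset.sum_congr rfl
  intro i _
  by_cases h : (i : ℕ) = 0 <;> simp [h] <;> ring

lemma mink_eq_zero_of_forall {m : ℕ} (x : Fin m → ℝ)
    (h : ∀ w, mink x w = 0) : x = 0 := by
  have h0 := h (fun i => if (i : ℕ) = 0 then -x i else x i)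
  rw [mink_eta_self] at h0
  funext i
  have := (Finset.sum_eq_zero_iff_of_nonneg (fun j _ => sq_nonneg (x j))).mp h0
    i (Finset.mem_univ i)
  exact pow_eq_zero_iff (n := 2) (by norm_num) |>.mp this

/-- If `u` is `g`-orthogonal to all of `v^⊥`, then `u` is a multiple of `v`. -/
lemma ortho_ortho {m : ℕ} (v u : Fin m → ℝ) (hv : v ≠ 0)
    (h : ∀ w, mink v w = 0 → mink u w = 0) : ∃ c : ℝ, u = c • v := by
  set ev : Fin m → ℝ := fun i => if (i : ℕ) = 0 then -v i else v i with hev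
  have hvev : mink v ev = ∑ i, v i ^ 2 := mink_eta_self v
  have hpos : 0 < mink v ev := by
    rw [hvev]
    obtain ⟨i, hi⟩ : ∃ i, v i ≠ 0 := by
      by_contra hc; push_neg at hc; exact hv (funext hc)
    exact Finset.sum_pos' (fun j _ => sq_nonneg _)
      ⟨i, Finset.mem_univ i, by positivity⟩
  set c : ℝ := mink u ev / mink v ev with hc
  refine ⟨c, ?_⟩
  have key : ∀ w, mink (u - c • v) w = 0 := by
    intro w
    have hw' : mink v (w - (mink v w / mink v ev) • ev) = 0 := by
      rw [mink_sub_right, mink_smul_right]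
      field_simp
      ring
    have hu := h _ hw'
    rw [mink_sub_right, mink_smul_right] at hu
    have : mink u w = mink v w / mink v ev * mink u ev := by linarith
    rw [mink_sub_left, mink_smul_left, this, hc]
    field_simp
    ring
  have := mink_eq_zero_of_forall _ key
  have : u - c • v = 0 := this
  linear_combination (norm := module) this

/-- In Minkowski space `ℝ^m` (`m ≥ 3`), let `v` be a nonzero null
vector and `P = v^⊥`.  Define the alternating form `ω₀` on pairs by
`ω₀((a₁,b₁),(a₂,b₂)) = g(a₁,b₂) − g(a₂,b₁)`.  Then the radical of `ω₀` is exactly the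
two-dimensional subspace of `P × P` spanned by `(v, 0)` and `(0, v)`. -/
theorem omega0_radical {m : ℕ} (hm : 3 ≤ m)
    (v : Fin m → ℝ)
    (hvnull : mink v v = 0) (hv : v ≠ 0) :
    {p : minkOrtho v × minkOrtho v |
        ∀ q : minkOrtho v × minkOrtho v,
          mink (p.1 : Fin m → ℝ) (q.2 : Fin m → ℝ)
            - mink (q.1 : Fin m → ℝ) (p.2 : Fin m → ℝ) = 0}
      = ↑(Submodule.span ℝ
          {(((⟨v, hvnull⟩ : minkOrtho v), (0 : minkOrtho v)) :
              minkOrtho v × minkOrtho v),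
           (((0 : minkOrtho v), (⟨v, hvnull⟩ : minkOrtho v)) :
              minkOrtho v × minkOrtho v)}) := by
  ext p
  simp only [Set.mem_setOf_eq, SetLike.mem_coe, Submodule.mem_span_pair]
  constructor
  · intro hp
    have ha : ∀ w, mink v w = 0 → mink (p.1 : Fin m → ℝ) w = 0 := by
      intro w hw
      have := hp ((0 : minkOrtho v), (⟨w, hw⟩ : minkOrtho v))
      simpa [mink_zero_left] using this
    have hb : ∀ w, mink v w = 0 → mink (p.2 : Fin m → ℝ) w = 0 := by
      intro w hw
      have := hp ((⟨w, hw⟩ : minkOrtho v), (0 : minkOrtho v))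
      simp only [ZeroMemClass.coe_zero, mink_zero_right] at this
      rw [mink_comm]
      linarith
    obtain ⟨ca, hca⟩ := ortho_ortho v _ hv ha
    obtain ⟨cb, hcb⟩ := ortho_ortho v _ hv hb
    refine ⟨ca, cb, ?_⟩
    apply Prod.ext <;> apply Subtype.ext <;>
      simp [hca.symm, hcb.symm]
  · rintro ⟨c, d, hcd⟩ q
    have h1 : (p.1 : Fin m → ℝ) = c • v := by
      rw [← hcd]; simp
    have h2 : (p.2 : Fin m → ℝ) = d • v := by
      rw [← hcd]; simp
    have hq1 : mink v (q.1 : Fin m → ℝ) = 0 := q.1.2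
    have hq2 : mink v (q.2 : Fin m → ℝ) = 0 := q.2.2
    rw [h1, h2, mink_smul_left, mink_smul_right, hq2,
      mink_comm (q.1 : Fin m → ℝ) v, hq1]
    ring
end

section
/- Let E be a real normed vector space, f : ℝ → ℝ a continuous function, and c : ℝ → E a twice differentiable curve satisfying the pregeodesic equation c''(t) = f(t) • c'(t) for all t ∈ ℝ. Then for all t ∈ ℝ, c(t) = c(0) + (∫₀ᵗ exp(∫₀ˣ f(y) dy) dx) • c'(0). In particular, setting φ(t) = ∫₀ᵗ exp(∫₀ˣ f(y) dy) dx, the curve c is the reparametrization by φ of the affine (geodesic) line t ↦ c(0) + t • c'(0), so reparametrizing c by the inverse of φ yields a curve with vanishing second derivative. -/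
/-- Let `E` be a real normed vector space, `f : ℝ → ℝ` continuous and
`c : ℝ → E` a twice differentiable curve satisfying the pregeodesic equation
`c''(t) = f(t) • c'(t)`.  Then for all `t`,
`c(t) = c(0) + (∫₀ᵗ exp(∫₀ˣ f(y) dy) dx) • c'(0)`;
that is, `c` is the reparametrization by `φ(t) = ∫₀ᵗ exp(∫₀ˣ f(y) dy) dx` of the affine
geodesic line `t ↦ c(0) + t • c'(0)`. -/
theorem pregeodesic_is_reparametrized_geodesic
    {E : Type*} [NormedAddCommGroup E] [NormedSpace ℝ E]
    (f : ℝ → ℝ) (hf : Continuous f)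
    (c : ℝ → E)
    (hc : Differentiable ℝ c) (hc' : Differentiable ℝ (deriv c))
    (heq : ∀ t : ℝ, deriv (deriv c) t = f t • deriv c t) :
    ∀ t : ℝ,
      c t = c 0 + (∫ x in (0:ℝ)..t, Real.exp (∫ y in (0:ℝ)..x, f y)) • deriv c 0 := by
  set F : ℝ → ℝ := fun t => ∫ y in (0:ℝ)..t, f y with hF
  have hFd : ∀ t, HasDerivAt F (f t) t := fun t =>
    intervalIntegral.integral_hasDerivAt_right (hf.intervalIntegrable 0 t)
      hf.aestronglyMeasurable.stronglyMeasurableAtFilter hf.continuousAt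
  have hFc : Continuous F :=
    continuous_iff_continuousAt.mpr fun t => (hFd t).differentiableAt.continuousAt
  -- g t = exp(-F t) • deriv c t has zero derivative
  set g : ℝ → E := fun t => Real.exp (-F t) • deriv c t with hg
  have hgd : ∀ t, HasDerivAt g 0 t := by
    intro t
    have h1 : HasDerivAt (fun t => Real.exp (-F t)) (-f t * Real.exp (-F t)) t := by
      have := (((hFd t).neg).exp)
      simpa [mul_comm] using this
    have h2 : HasDerivAt (deriv c) (f t • deriv c t) t := by
      have := (hc' t).hasDerivAt
      rwa [heq t] at this
    have := h1.smul h2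
    refine this.congr_deriv ?_
    module
  have hgdiff : Differentiable ℝ g := fun t => (hgd t).differentiableAt
  have hconst : ∀ t, g t = g 0 := fun t =>
    is_const_of_deriv_eq_zero hgdiff (fun x => (hgd x).deriv) t 0
  have hdc : ∀ t, deriv c t = Real.exp (F t) • deriv c 0 := by
    intro t
    have h0 : g 0 = deriv c 0 := by simp [hg, hF]
    have := hconst t
    rw [h0, hg] at this
    have := congrArg (fun v => Real.exp (F t) • v) this
    simpa [smul_smul, ← Real.exp_add] using this
  -- φ t = ∫₀ᵗ exp(F x) dx
  set phi : ℝ → ℝ := fun t => ∫ x in (0:ℝ)..t, Real.exp (F x) with hphi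
  have hec : Continuous fun x => Real.exp (F x) := Real.continuous_exp.comp hFc
  have hphid : ∀ t, HasDerivAt phi (Real.exp (F t)) t := fun t =>
    intervalIntegral.integral_hasDerivAt_right (hec.intervalIntegrable 0 t)
      hec.aestronglyMeasurable.stronglyMeasurableAtFilter hec.continuousAt
  -- G t = c t - phi t • deriv c 0 has zero derivative
  set G : ℝ → E := fun t => c t - phi t • deriv c 0 with hG
  have hGd : ∀ t, HasDerivAt G 0 t := by
    intro t
    have h1 : HasDerivAt c (deriv c t) t := (hc t).hasDerivAt
    have h2 : HasDerivAt (fun t => phi t • deriv c 0)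
        (Real.exp (F t) • deriv c 0) t := (hphid t).smul_const _
    have := h1.sub h2
    rw [hdc t] at this
    exact this.congr_deriv (sub_self _)
  have hGdiff : Differentiable ℝ G := fun t => (hGd t).differentiableAt
  have hGconst : ∀ t, G t = G 0 :=
    fun t => is_const_of_deriv_eq_zero hGdiff (fun x => (hGd x).deriv) t 0
  intro t
  have := hGconst t
  have hphi0 : phi 0 = 0 := by simp [hphi]
  rw [hG] at this
  simp only [hphi0, zero_smul, sub_zero] at this
  have : c t = c 0 + phi t • deriv c 0 := by
    rw [← this]; abel
  simpa [hphi, hF] using this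
end
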